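/- Let K, t, L be positive integers such that K − tL is even, K − tL ≥ 2, and t(K − tL) ≥ 2K. Then, as real numbers, (K − tL)/(t + 1) < ∑_{h=(K−tL+2)/2}^{K−tL} 2/(1 + ⌈tL/h⌉), where the sum is over integers h and ⌈tL/h⌉ denotes the ceiling of the rational number tL/h. -/

import Mathlib

/-- if `K − tL` is even, `K − tL ≥ 2` and `t(K − tL) ≥ 2K`, then
`(K − tL)/(t+1) < ∑_{h=(K−tL+2)/2}^{K−tL} 2/(1 + ⌈tL/h⌉)` as real numbers. -/
theorem stmt_9 (K t L : ℕ) (ht : 1 ≤ t) (hL : 1 ≤ L)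
    (heven : Even (K - t * L)) (h2 : 2 ≤ K - t * L)
    (hbig : 2 * K ≤ t * (K - t * L)) :
    ((K : ℝ) - t * L) / (t + 1) <
      ∑ h ∈ Finset.Icc ((K - t * L + 2) / 2) (K - t * L),
        2 / (1 + ((⌈(t * L : ℚ) / (h : ℚ)⌉ : ℤ) : ℝ)) := by
  set n := K - t * L with hn
  have hK : t * L + n = K := by omega
  have htL1 : 1 ≤ t * L := Nat.one_le_iff_ne_zero.mpr (by positivity)
  have hbig' : 2 * (t * L) + 2 * n ≤ t * n := by omega
  have ht3 : 3 ≤ t := by nlinarith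
  obtain ⟨m, hm⟩ := heven
  have hm' : n = 2 * m := by omega
  have hm1 : 1 ≤ m := by omega
  -- per-term bound
  have key : ∀ h ∈ Finset.Icc ((n + 2) / 2) n,
      2 / ((t : ℝ) - 1) ≤ 2 / (1 + ((⌈(t * L : ℚ) / (h : ℚ)⌉ : ℤ) : ℝ)) := by
    intro h hh
    simp only [Finset.mem_Icc] at hh
    have hhl : m + 1 ≤ h := by omega
    have hhpos : (0 : ℚ) < (h : ℚ) := by exact_mod_cast (by omega : 0 < h)
    have hceil_pos : (1 : ℤ) ≤ ⌈(t * L : ℚ) / (h : ℚ)⌉ := by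
      have : (0 : ℚ) < (t * L : ℚ) / (h : ℚ) := by
        apply div_pos _ hhpos
        exact_mod_cast htL1
      exact Int.ceil_pos.mpr this
    have hceil_le : ⌈(t * L : ℚ) / (h : ℚ)⌉ ≤ (t : ℤ) - 2 := by
      rw [Int.ceil_le]
      rw [div_le_iff₀ hhpos]
      push_cast
      have h1 : (2 * m + 2 : ℚ) ≤ 2 * h := by exact_mod_cast (by omega : 2 * m + 2 ≤ 2 * h)
      have h2q : 2 * ((t : ℚ) * L) + 2 * (2 * m) ≤ t * (2 * m) := by
        exact_mod_cast (hm' ▸ hbig' : 2 * (t * L) + 2 * (2 * m) ≤ t * (2 * m))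
      have ht3q : (3 : ℚ) ≤ t := by exact_mod_cast ht3
      nlinarith
    set c : ℝ := ((⌈(t * L : ℚ) / (h : ℚ)⌉ : ℤ) : ℝ) with hc
    have hc1 : (1 : ℝ) ≤ c := by rw [hc]; exact_mod_cast hceil_pos
    have hc2 : c ≤ (t : ℝ) - 2 := by
      have := hceil_le
      have : ((⌈(t * L : ℚ) / (h : ℚ)⌉ : ℤ) : ℝ) ≤ (((t : ℤ) - 2 : ℤ) : ℝ) := by exact_mod_cast this
      push_cast at this
      linarith
    have : (0 : ℝ) < 1 + c := by linarith
    apply div_le_div_of_nonneg_left (by norm_num) this (by linarith)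
  have hsum : (Finset.Icc ((n + 2) / 2) n).card • (2 / ((t : ℝ) - 1)) ≤
      ∑ h ∈ Finset.Icc ((n + 2) / 2) n,
        2 / (1 + ((⌈(t * L : ℚ) / (h : ℚ)⌉ : ℤ) : ℝ)) :=
    Finset.card_nsmul_le_sum _ _ _ key
  have hcard : (Finset.Icc ((n + 2) / 2) n).card = m := by
    rw [Nat.card_Icc]; omega
  rw [hcard] at hsum
  have hKr : ((K : ℝ) - t * L) = n := by
    have : (t * L : ℕ) ≤ K := by omega
    push_cast [← hK]
    ring
  rw [hKr]
  refine lt_of_lt_of_le ?_ hsum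
  have ht3r : (3 : ℝ) ≤ t := by exact_mod_cast ht3
  have hnr : (n : ℝ) = 2 * m := by exact_mod_cast hm'
  have hmpos : (0 : ℝ) < m := by exact_mod_cast hm1
  rw [nsmul_eq_mul, hnr]
  rw [div_lt_iff₀ (by linarith : (0:ℝ) < (t:ℝ) + 1)]
  have : (0 : ℝ) < (t : ℝ) - 1 := by linarith
  rw [mul_comm (m:ℝ), mul_assoc, div_mul_eq_mul_div, lt_div_iff₀ this]
  nlinarith
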